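/- Let V be a 2n-dimensional real vector space with inner product g and a linear map J: V → V satisfying J² = −id and g(JX,JY) = g(X,Y) for all X,Y; set σ = g(J·,·). Suppose A₁, A₂ ∈ End(V) satisfy σ(AᵢX,Y) + σ(X,AᵢY) = 0 for all X,Y ∈ V and i = 1,2, that A₁A₂ = A₂A₁, and that A₁ + JA₁J + JA₂ − A₂J = 0. Then A₁ and A₂ each commute with J and are skew-symmetric with respect to g (i.e. A₁, A₂ ∈ 𝔲(V,g,J)). -/

import Mathlib

/-- commuting symplectic endomorphisms satisfying the compatibility relation
`A₁ + JA₁J + JA₂ − A₂J = 0` are unitary, i.e. commute with `J` and are `g`-skew. -/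
theorem symplectic_endos_are_unitary
    {V : Type*} [AddCommGroup V] [Module ℝ V] [FiniteDimensional ℝ V]
    (n : ℕ) (hn : Module.finrank ℝ V = 2 * n)
    (g : V →ₗ[ℝ] V →ₗ[ℝ] ℝ)
    (hsymm : ∀ x y : V, g x y = g y x) (hpos : ∀ x : V, x ≠ 0 → 0 < g x x)
    (J : V →ₗ[ℝ] V) (hJ : ∀ x : V, J (J x) = -x)
    (hcomp : ∀ x y : V, g (J x) (J y) = g x y)
    (A₁ A₂ : V →ₗ[ℝ] V)
    (hsp₁ : ∀ x y : V, g (J (A₁ x)) y + g (J x) (A₁ y) = 0)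
    (hsp₂ : ∀ x y : V, g (J (A₂ x)) y + g (J x) (A₂ y) = 0)
    (hcommAA : ∀ x : V, A₁ (A₂ x) = A₂ (A₁ x))
    (hrel : ∀ x : V, A₁ x + J (A₁ (J x)) + J (A₂ x) - A₂ (J x) = 0) :
    (∀ x : V, A₁ (J x) = J (A₁ x)) ∧ (∀ x y : V, g (A₁ x) y + g x (A₁ y) = 0) ∧
    (∀ x : V, A₂ (J x) = J (A₂ x)) ∧ (∀ x y : V, g (A₂ x) y + g x (A₂ y) = 0) := by
  classical
  -- basic positivity facts
  have hdef : ∀ x : V, g x x = 0 → x = 0 := by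
    intro x h
    by_contra hx
    exact absurd h (ne_of_gt (hpos x hx))
  have gnonneg : ∀ x : V, 0 ≤ g x x := by
    intro x
    rcases eq_or_ne x 0 with h | h
    · simp [h]
    · exact le_of_lt (hpos x h)
  -- operator-level hypotheses
  have hj2 : J * J = (-1 : Module.End ℝ V) := by
    ext x
    simp [Module.End.mul_apply, hJ]
  have hcE : J * J = J * J := rfl
  have hcEA : A₁ * A₂ = A₂ * A₁ := by
    ext x
    simp only [Module.End.mul_apply]
    exact hcommAA x
  have hrelE : A₁ + J * A₁ * J + J * A₂ - A₂ * J = 0 := by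
    ext x
    simpa [Module.End.mul_apply, LinearMap.add_apply, LinearMap.sub_apply] using hrel x
  have hjj : ∀ X : Module.End ℝ V, J * (J * X) = -X := by
    intro X; rw [← mul_assoc, hj2, neg_one_mul]
  have hcE' : ∀ X : Module.End ℝ V, A₁ * (A₂ * X) = A₂ * (A₁ * X) := by
    intro X; rw [← mul_assoc, hcEA, mul_assoc]
  -- the relevant operators
  set t : Module.End ℝ V := J * A₁ - A₁ * J with ht
  set p : Module.End ℝ V := A₁ - J * A₁ * J with hp
  set q : Module.End ℝ V := A₁ + J * A₁ * J with hq
  set r : Module.End ℝ V := A₂ - J * A₂ * J with hr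
  set s : Module.End ℝ V := A₂ + J * A₂ * J with hs
  set k : Module.End ℝ V := p * t - t * p with hk
  set m : Module.End ℝ V := J * (t * t) with hm
  -- s = t (from the compatibility relation)
  have hst : s = t := by
    have h3 : s - t = -(J * (A₁ + J * A₁ * J + J * A₂ - A₂ * J)) := by
      rw [hs, ht]; noncomm_ring [hjj, hj2]
    rw [hrelE, mul_zero, neg_zero] at h3
    exact sub_eq_zero.mp h3
  have hqt : q = -(J * t) := by rw [hq, ht]; noncomm_ring [hjj, hj2]
  have hjt' : ∀ X : Module.End ℝ V, t * (J * X) = -(J * (t * X)) := by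
    intro X; rw [ht]; noncomm_ring [hjj, hj2]
  have hrJ' : ∀ X : Module.End ℝ V, r * (J * X) = J * (r * X) := by
    intro X; rw [hr]; noncomm_ring [hjj, hj2]
  -- commutator identities
  have id1 : p * r - r * p = s * q - q * s := by
    rw [hp, hr, hs, hq]; noncomm_ring [hjj, hj2, hcEA, hcE']
  have id2 : p * s - s * p = r * q - q * r := by
    rw [hp, hr, hs, hq]; noncomm_ring [hjj, hj2, hcEA, hcE']
  have hPR : p * r - r * p = m + m := by
    rw [id1, hst, hqt, hm]; noncomm_ring [hjt', hjj, hj2]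
  have id2' : p * t - t * p = r * q - q * r := by rw [← hst]; exact id2
  have hKalt : k = J * (t * r) - J * (r * t) := by
    rw [hk, id2', hqt]; noncomm_ring [hjt', hrJ', hjj, hj2]
  have hRT : r * t - t * r = J * k := by
    rw [hKalt]; noncomm_ring [hjj]
  have hmm : m * m = -(t * (t * (t * t))) := by
    rw [hm]; noncomm_ring [hjt', hjj]
  have hRM : r * m - m * r = t * k - k * t := by
    have h5 : r * (t * t) - (t * t) * r = (J * k) * t + t * (J * k) := by
      have h6 := congrArg (fun X : Module.End ℝ V => X * t + t * X) hRT
      rw [← h6]; noncomm_ring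
    rw [hm]
    have e1 : r * (J * (t * t)) = J * (r * (t * t)) := hrJ' _
    have e2 : J * (t * t) * r = J * ((t * t) * r) := by rw [mul_assoc]
    rw [e1, e2, ← mul_sub, h5]
    have e3 : t * (J * k) = -(J * (t * k)) := hjt' k
    rw [e3]
    noncomm_ring [hjj]
  -- the trace identity : trace (k*k) = 2 trace (m*m)
  have trKK : LinearMap.trace ℝ V (k * k)
      = LinearMap.trace ℝ V (m * m) + LinearMap.trace ℝ V (m * m) := by
    have e0 : k * k = (p * t) * k - (t * p) * k := by
      nth_rewrite 1 [hk]; rw [sub_mul]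
    have e1 : LinearMap.trace ℝ V ((t * p) * k) = LinearMap.trace ℝ V (p * (k * t)) := by
      rw [mul_assoc, LinearMap.trace_mul_comm, mul_assoc]
    have e2 : LinearMap.trace ℝ V ((p * t) * k) = LinearMap.trace ℝ V (p * (t * k)) := by
      rw [mul_assoc]
    have c1 : LinearMap.trace ℝ V (k * k)
        = LinearMap.trace ℝ V (p * (t * k)) - LinearMap.trace ℝ V (p * (k * t)) := by
      rw [e0, map_sub, e1, e2]
    have c2 : LinearMap.trace ℝ V (p * (t * k)) - LinearMap.trace ℝ V (p * (k * t))
        = LinearMap.trace ℝ V (p * (r * m)) - LinearMap.trace ℝ V (p * (m * r)) := by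
      rw [← map_sub, ← map_sub, ← mul_sub, ← mul_sub, hRM]
    have c3 : LinearMap.trace ℝ V (p * (m * r)) = LinearMap.trace ℝ V ((r * p) * m) := by
      rw [← mul_assoc, LinearMap.trace_mul_comm, ← mul_assoc]
    have c4 : LinearMap.trace ℝ V (p * (r * m)) = LinearMap.trace ℝ V ((p * r) * m) := by
      rw [mul_assoc]
    rw [c1, c2, c3, c4, ← map_sub, ← sub_mul, hPR, add_mul, map_add]
  -- pointwise application lemmas
  have tap : ∀ x : V, t x = J (A₁ x) - A₁ (J x) := by
    intro x; rw [ht]; simp [LinearMap.sub_apply, Module.End.mul_apply]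
  have pap : ∀ x : V, p x = A₁ x - J (A₁ (J x)) := by
    intro x; rw [hp]; simp [LinearMap.sub_apply, Module.End.mul_apply]
  have kap : ∀ x : V, k x = p (t x) - t (p x) := by
    intro x; rw [hk]; simp [LinearMap.sub_apply, Module.End.mul_apply]
  -- symmetry lemmas with respect to g
  have hJsk : ∀ x y : V, g (J x) y = -(g x (J y)) := by
    intro x y
    have h := hcomp x (J y)
    rw [hJ y, map_neg] at h
    linarith
  have hS1 : ∀ x y : V, g (J (A₁ x)) y = g x (J (A₁ y)) := by
    intro x y
    have h := hsp₁ x y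
    have h2 := hJsk x (A₁ y)
    linarith
  have hT1 : ∀ x y : V, g (J (A₁ (J x))) y = g x (A₁ y) := by
    intro x y
    have h := hS1 (J x) y
    have h2 := hJsk x (J (A₁ y))
    rw [hJ (A₁ y), map_neg] at h2
    linarith
  have hS2 : ∀ x y : V, g (A₁ (J x)) y = g x (A₁ (J y)) := by
    intro x y
    have h1 := hcomp (A₁ (J x)) y
    have h2 := hS1 (J x) (J y)
    have h3 := hcomp x (A₁ (J y))
    linarith
  have tsym : ∀ x y : V, g (t x) y = g x (t y) := by
    intro x y
    rw [tap x, tap y, map_sub, map_sub, LinearMap.sub_apply]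
    have h1 := hS1 x y
    have h2 := hS2 x y
    linarith
  have psk : ∀ x y : V, g (p x) y = -(g x (p y)) := by
    intro x y
    rw [pap x, pap y, map_sub, map_sub, LinearMap.sub_apply]
    have h1 := hT1 x y
    have h2 := hT1 y x
    have h3 := hsymm x (J (A₁ (J y)))
    have h4 := hsymm y (A₁ x)
    have h5 := hsymm (A₁ x) y
    linarith
  have ksym : ∀ x y : V, g (k x) y = g x (k y) := by
    intro x y
    rw [kap x, kap y, map_sub, map_sub, LinearMap.sub_apply]
    have h1 := psk (t x) y
    have h2 := tsym (p x) y
    have h3 := tsym x (p y)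
    have h4 := psk x (t y)
    linarith
  -- inner product space structure coming from g
  let core : InnerProductSpace.Core ℝ V :=
    { inner := fun x y => g x y
      conj_inner_symm := fun x y => by simpa using hsymm y x
      re_inner_nonneg := fun x => by simpa using gnonneg x
      add_left := fun x y z => by simp
      smul_left := fun x y c => by simp
      definite := fun x h => hdef x (by simpa using h) }
  letI : NormedAddCommGroup V := core.toNormedAddCommGroup
  letI : InnerProductSpace ℝ V := InnerProductSpace.ofCore core.toCore
  have hinner : ∀ x y : V, (inner ℝ x y : ℝ) = g x y := fun _ _ => rfl
  let b := stdOrthonormalBasis ℝ V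
  have trform : ∀ f : Module.End ℝ V,
      LinearMap.trace ℝ V f = ∑ i, g (b i) (f (b i)) := by
    intro f
    rw [LinearMap.trace_eq_matrix_trace ℝ b.toBasis f]
    simp [Matrix.trace, Matrix.diag, LinearMap.toMatrix_apply,
      OrthonormalBasis.coe_toBasis_repr_apply, OrthonormalBasis.coe_toBasis,
      OrthonormalBasis.repr_apply_apply, hinner]
  -- nonnegativity of the two traces
  have nonnegK : 0 ≤ LinearMap.trace ℝ V (k * k) := by
    rw [trform]
    apply Finset.sum_nonneg
    intro i _
    have e : g (b i) ((k * k) (b i)) = g (k (b i)) (k (b i)) := by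
      rw [Module.End.mul_apply, ← ksym]
    rw [e]
    exact gnonneg _
  have nonnegT : 0 ≤ LinearMap.trace ℝ V (t * (t * (t * t))) := by
    rw [trform]
    apply Finset.sum_nonneg
    intro i _
    have e : g (b i) ((t * (t * (t * t))) (b i)) = g (t (t (b i))) (t (t (b i))) := by
      simp only [Module.End.mul_apply]
      rw [← tsym, ← tsym]
    rw [e]
    exact gnonneg _
  -- hence trace (t⁴) = 0
  have trT4 : LinearMap.trace ℝ V (t * (t * (t * t))) = 0 := by
    have h1 : LinearMap.trace ℝ V (m * m)
        = -(LinearMap.trace ℝ V (t * (t * (t * t)))) := by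
      rw [hmm, map_neg]
    rw [h1] at trKK
    linarith
  -- hence t ∘ t = 0
  have htt0 : ∀ i, t (t (b i)) = 0 := by
    have h2 : ∑ i, g (b i) ((t * (t * (t * t))) (b i)) = 0 := by
      rw [← trform]; exact trT4
    have h3 : ∀ i ∈ Finset.univ, (0 : ℝ) ≤ g (b i) ((t * (t * (t * t))) (b i)) := by
      intro i _
      have e : g (b i) ((t * (t * (t * t))) (b i)) = g (t (t (b i))) (t (t (b i))) := by
        simp only [Module.End.mul_apply]
        rw [← tsym, ← tsym]
      rw [e]; exact gnonneg _
    have h4 := (Finset.sum_eq_zero_iff_of_nonneg h3).mp h2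
    intro i
    have h5 := h4 i (Finset.mem_univ i)
    have e : g (b i) ((t * (t * (t * t))) (b i)) = g (t (t (b i))) (t (t (b i))) := by
      simp only [Module.End.mul_apply]
      rw [← tsym, ← tsym]
    rw [e] at h5
    exact hdef _ h5
  have httE : t * t = 0 := by
    refine Module.Basis.ext b.toBasis fun i => ?_
    rw [OrthonormalBasis.coe_toBasis]
    simp only [Module.End.mul_apply, LinearMap.zero_apply]
    exact htt0 i
  -- hence t = 0
  have ht0 : ∀ x : V, t x = 0 := by
    intro x
    have h6 : t (t x) = 0 := by
      rw [← Module.End.mul_apply, httE]; rfl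
    have h7 : g (t x) (t x) = 0 := by
      rw [tsym x (t x), h6]; simp
    exact hdef _ h7
  -- conclusions
  have hc1 : ∀ x : V, A₁ (J x) = J (A₁ x) := by
    intro x
    have h := ht0 x
    rw [tap x] at h
    exact (sub_eq_zero.mp h).symm
  have hc3 : ∀ x : V, A₂ (J x) = J (A₂ x) := by
    intro x
    have hsx : s x = 0 := by rw [hst]; exact ht0 x
    rw [hs] at hsx
    simp only [LinearMap.add_apply, Module.End.mul_apply] at hsx
    have h := congrArg J hsx
    rw [map_add, hJ (A₂ (J x)), map_zero] at h
    have := add_neg_eq_zero.mp h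
    exact this.symm
  have hc2 : ∀ x y : V, g (A₁ x) y + g x (A₁ y) = 0 := by
    intro x y
    have e : J (A₁ (-(J x))) = A₁ x := by
      rw [map_neg, map_neg, hc1, hJ, neg_neg]
    have e2 : J (-(J x)) = x := by rw [map_neg, hJ, neg_neg]
    have h := hsp₁ (-(J x)) y
    rw [e, e2] at h
    exact h
  have hc4 : ∀ x y : V, g (A₂ x) y + g x (A₂ y) = 0 := by
    intro x y
    have e : J (A₂ (-(J x))) = A₂ x := by
      rw [map_neg, map_neg, hc3, hJ, neg_neg]
    have e2 : J (-(J x)) = x := by rw [map_neg, hJ, neg_neg]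
    have h := hsp₂ (-(J x)) y
    rw [e, e2] at h
    exact h
  exact ⟨hc1, hc2, hc3, hc4⟩
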